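/- (Covering relations give symbolic dynamics.) Let N₁, …, N_k be pairwise disjoint h-sets in ℝ², let f be a continuous map defined on ⋃_{i=1}^k |N_i| with values in ℝ², and let M be a k×k matrix with entries in {0,1} such that whenever M_{ij} = 1, the h-set N_i f-covers N_j. Then for every biinfinite sequence (c_j)_{j∈ℤ} with values in {1, …, k} satisfying M_{c_j c_{j+1}} = 1 for all j ∈ ℤ, there exists a biinfinite sequence of points (x_j)_{j∈ℤ} such that x_j ∈ |N_{c_j}| and f(x_j) = x_{j+1} for all j ∈ ℤ. -/

import Mathlib

open Set

/-- An h-set in `ℝ²`: a rectangle `[a,b] × [c,d]` with `a < b` and `c < d`. -/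
structure HSet where
  a : ℝ
  b : ℝ
  c : ℝ
  d : ℝ
  hab : a < b
  hcd : c < d

/-- The support `|N| = [a,b] × [c,d]` of an h-set. -/
def HSet.box (N : HSet) : Set (ℝ × ℝ) := Icc N.a N.b ×ˢ Icc N.c N.d

/-- The left edge `N^{le} = {a} × [c,d]`. -/
def HSet.leftEdge (N : HSet) : Set (ℝ × ℝ) := {N.a} ×ˢ Icc N.c N.d

/-- The right edge `N^{re} = {b} × [c,d]`. -/
def HSet.rightEdge (N : HSet) : Set (ℝ × ℝ) := {N.b} ×ˢ Icc N.c N.d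

/-- The left side `N^{l} = (-∞,a) × [c,d]`. -/
def HSet.leftSide (N : HSet) : Set (ℝ × ℝ) := Iio N.a ×ˢ Icc N.c N.d

/-- The right side `N^{r} = (b,∞) × [c,d]`. -/
def HSet.rightSide (N : HSet) : Set (ℝ × ℝ) := Ioi N.b ×ˢ Icc N.c N.d

/-- The horizontal strip `N^{s} = ℝ × (c,d)`. -/
def HSet.strip (N : HSet) : Set (ℝ × ℝ) := univ ×ˢ Ioo N.c N.d

/-- The covering relation `N₁ ⟹f N₂`: `f(|N₁|) ⊆ N₂^s` and the left/right edges of `N₁`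
are mapped to the left/right (or right/left) sides of `N₂`. -/
def Covers (f : ℝ × ℝ → ℝ × ℝ) (N₁ N₂ : HSet) : Prop :=
  MapsTo f N₁.box N₂.strip ∧
  ((MapsTo f N₁.rightEdge N₂.rightSide ∧ MapsTo f N₁.leftEdge N₂.leftSide) ∨
   (MapsTo f N₁.rightEdge N₂.leftSide ∧ MapsTo f N₁.leftEdge N₂.rightSide))

lemma oneD {ψ : ℝ → ℝ} {s t a' b' : ℝ} (hst : s ≤ t) (hab : a' ≤ b')
    (hcont : ContinuousOn ψ (Icc s t)) (hs : ψ s < a') (ht : b' < ψ t) :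
    ∃ u v, u ∈ Icc s t ∧ v ∈ Icc s t ∧ ψ u = a' ∧ ψ v = b' ∧
      ∀ x ∈ Set.uIcc u v, ψ x ∈ Icc a' b' := by
  set T : Set ℝ := Icc s t ∩ ψ ⁻¹' {b'} with hT
  have hTcl : IsClosed T := hcont.preimage_isClosed_of_isClosed isClosed_Icc isClosed_singleton
  have hTne : T.Nonempty := by
    obtain ⟨v₀, hv₀, hψ⟩ := intermediate_value_Icc hst hcont
      ⟨le_of_lt (lt_of_lt_of_le hs hab), le_of_lt ht⟩
    exact ⟨v₀, hv₀, hψ⟩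
  have hTbdd : BddBelow T := ⟨s, fun x hx => hx.1.1⟩
  set v := sInf T with hv
  have hvT : v ∈ T := hTcl.csInf_mem hTne hTbdd
  have hvmem : v ∈ Icc s t := hvT.1
  have hψv : ψ v = b' := hvT.2
  -- now find u in [s, v]
  have hsv : s ≤ v := hvmem.1
  have hcont2 : ContinuousOn ψ (Icc s v) := hcont.mono (Icc_subset_Icc le_rfl hvmem.2)
  set S : Set ℝ := Icc s v ∩ ψ ⁻¹' {a'} with hS
  have hScl : IsClosed S := hcont2.preimage_isClosed_of_isClosed isClosed_Icc isClosed_singleton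
  have hSne : S.Nonempty := by
    obtain ⟨u₀, hu₀, hψ⟩ := intermediate_value_Icc hsv hcont2 ⟨le_of_lt hs, hψv ▸ hab⟩
    exact ⟨u₀, hu₀, hψ⟩
  have hSbdd : BddAbove S := ⟨v, fun x hx => hx.1.2⟩
  set u := sSup S with hu
  have huS : u ∈ S := hScl.csSup_mem hSne hSbdd
  have humem : u ∈ Icc s v := huS.1
  have hψu : ψ u = a' := huS.2
  have huv : u ≤ v := humem.2
  refine ⟨u, v, ⟨humem.1, humem.2.trans hvmem.2⟩, hvmem, hψu, hψv, ?_⟩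
  intro x hx
  rw [Set.uIcc_of_le huv] at hx
  have hxst : x ∈ Icc s t := ⟨humem.1.trans hx.1, hx.2.trans hvmem.2⟩
  constructor
  · by_contra hlt
    push_neg at hlt
    have hxv : x ∈ Icc x v := ⟨le_rfl, hx.2⟩
    have hcont3 : ContinuousOn ψ (Icc x v) :=
      hcont.mono (Icc_subset_Icc hxst.1 hvmem.2)
    obtain ⟨y, hy, hψy⟩ := intermediate_value_Icc hx.2 hcont3 ⟨le_of_lt hlt, hψv ▸ hab⟩
    have hyS : y ∈ S := ⟨⟨humem.1.trans (hx.1.trans hy.1), hy.2⟩, hψy⟩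
    have : y ≤ u := le_csSup hSbdd hyS
    have hxu : u < x := by
      rcases lt_or_eq_of_le hx.1 with h | h
      · exact h
      · exfalso; rw [← h] at hlt; linarith [hψu]
    linarith [hy.1]
  · by_contra hlt
    push_neg at hlt
    have hcont3 : ContinuousOn ψ (Icc u x) :=
      hcont.mono (Icc_subset_Icc (humem.1) hxst.2)
    obtain ⟨y, hy, hψy⟩ := intermediate_value_Icc hx.1 hcont3 ⟨hψu ▸ hab, le_of_lt hlt⟩
    have hyT : y ∈ T := ⟨⟨humem.1.trans hy.1, (hy.2.trans hx.2).trans hvmem.2⟩, hψy⟩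
    have hvy : v ≤ y := csInf_le hTbdd hyT
    have hxv : x < v := by
      rcases lt_or_eq_of_le hx.2 with h | h
      · exact h
      · exfalso; rw [h] at hlt; linarith [hψv]
    linarith [hy.2]


lemma oneD' {ψ : ℝ → ℝ} {s t a' b' : ℝ} (hst : s ≤ t) (hab : a' ≤ b')
    (hcont : ContinuousOn ψ (Icc s t))
    (h : (ψ s < a' ∧ b' < ψ t) ∨ (ψ t < a' ∧ b' < ψ s)) :
    ∃ u v, u ∈ Icc s t ∧ v ∈ Icc s t ∧ ψ u = a' ∧ ψ v = b' ∧
      ∀ x ∈ Set.uIcc u v, ψ x ∈ Icc a' b' := by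
  rcases h with ⟨h1, h2⟩ | ⟨h1, h2⟩
  · exact oneD hst hab hcont h1 h2
  · have hcont' : ContinuousOn (fun x => a' + b' - ψ x) (Icc s t) :=
      (continuousOn_const.sub hcont)
    obtain ⟨u, v, hu, hv, hψu, hψv, hmem⟩ :=
      oneD (ψ := fun x => a' + b' - ψ x) hst hab hcont'
        (by simpa using by linarith) (by simpa using by linarith)
    refine ⟨v, u, hv, hu, by linarith, by linarith, ?_⟩
    intro x hx
    rw [Set.uIcc_comm] at hx
    have := hmem x hx
    simp only [mem_Icc] at this ⊢
    constructor <;> linarith [this.1, this.2]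

lemma key (k : ℕ) (N : Fin k → HSet) (f : ℝ × ℝ → ℝ × ℝ)
    (hf : ContinuousOn f (⋃ i, (N i).box)) (w : ℕ → Fin k)
    (hw : ∀ i, Covers f (N (w i)) (N (w (i + 1)))) (n : ℕ) :
    ∃ p : ℝ × ℝ, ∀ i ≤ n, f^[i] p ∈ (N (w i)).box := by
  set y₀ : ℝ := ((N (w 0)).c + (N (w 0)).d) / 2 with hy₀def
  set γ : ℝ → ℝ × ℝ := fun u => (u, y₀) with hγ
  set ψ : ℕ → ℝ → ℝ := fun i x => (f^[i] (γ x)).1 with hψ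
  have hy₀ : y₀ ∈ Icc (N (w 0)).c (N (w 0)).d := by
    have := (N (w 0)).hcd
    constructor <;> · simp only [hy₀def]; linarith
  have memBox : ∀ (x : ℝ) (m : ℕ), (∀ i ≤ m, ψ i x ∈ Icc (N (w i)).a (N (w i)).b) →
      ∀ i ≤ m, f^[i] (γ x) ∈ (N (w i)).box := by
    intro x m h i
    induction i with
    | zero =>
      intro _
      refine ⟨?_, hy₀⟩
      simpa [ψ, γ] using h 0 (Nat.zero_le m)
    | succ i ih =>
      intro hi
      have hb : f^[i] (γ x) ∈ (N (w i)).box := ih (le_trans (Nat.le_succ i) hi)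
      have hstrip : f (f^[i] (γ x)) ∈ (N (w (i + 1))).strip := (hw i).1 hb
      rw [Function.iterate_succ_apply']
      refine ⟨?_, ?_⟩
      · have := h (i + 1) hi
        simpa [ψ, Function.iterate_succ_apply'] using this
      · exact ⟨le_of_lt hstrip.2.1, le_of_lt hstrip.2.2⟩
  have contOn : ∀ (I : Set ℝ) (m : ℕ),
      (∀ x ∈ I, ∀ i < m, f^[i] (γ x) ∈ (N (w i)).box) →
      ContinuousOn (fun x => f^[m] (γ x)) I := by
    intro I m
    induction m with
    | zero =>
      intro _
      simpa [γ] using (continuous_id.prodMk continuous_const).continuousOn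
    | succ m ih =>
      intro h
      have h1 : ContinuousOn (fun x => f^[m] (γ x)) I :=
        ih (fun x hx i hi => h x hx i (hi.trans (Nat.lt_succ_self m)))
      have h2 : ContinuousOn (fun x => f (f^[m] (γ x))) I :=
        ContinuousOn.comp hf h1
          (fun x hx => mem_iUnion.2 ⟨w m, h x hx m (Nat.lt_succ_self m)⟩)
      simpa [Function.iterate_succ_apply'] using h2
  have main : ∀ m : ℕ, ∃ u v : ℝ,
      ψ m u = (N (w m)).a ∧ ψ m v = (N (w m)).b ∧
      ∀ x ∈ Set.uIcc u v, ∀ i ≤ m, ψ i x ∈ Icc (N (w i)).a (N (w i)).b := by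
    intro m
    induction m with
    | zero =>
      refine ⟨(N (w 0)).a, (N (w 0)).b, by simp [ψ, γ], by simp [ψ, γ], ?_⟩
      intro x hx i hi
      interval_cases i
      rw [Set.uIcc_of_le (le_of_lt (N (w 0)).hab)] at hx
      simpa [ψ, γ] using hx
    | succ m ih =>
      obtain ⟨u, v, hψu, hψv, hmem⟩ := ih
      set I := Set.uIcc u v with hI
      have hmemBox : ∀ x ∈ I, ∀ i ≤ m, f^[i] (γ x) ∈ (N (w i)).box :=
        fun x hx => memBox x m (hmem x hx)
      have hcontψ : ContinuousOn (ψ (m + 1)) I := by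
        have := (contOn I (m + 1)
          (fun x hx i hi => hmemBox x hx i (Nat.lt_succ_iff.1 hi))).fst
        exact this
      -- edge images
      have hedge : ∀ x ∈ I, ψ m x = (N (w m)).a → f^[m] (γ x) ∈ (N (w m)).leftEdge := by
        intro x hx he
        have hb := hmemBox x hx m le_rfl
        exact ⟨he, hb.2⟩
      have hedge' : ∀ x ∈ I, ψ m x = (N (w m)).b → f^[m] (γ x) ∈ (N (w m)).rightEdge := by
        intro x hx he
        have hb := hmemBox x hx m le_rfl
        exact ⟨he, hb.2⟩
      have hue : f^[m] (γ u) ∈ (N (w m)).leftEdge := hedge u Set.left_mem_uIcc hψu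
      have hve : f^[m] (γ v) ∈ (N (w m)).rightEdge := hedge' v Set.right_mem_uIcc hψv
      have hψsucc : ∀ x, ψ (m + 1) x = (f (f^[m] (γ x))).1 := by
        intro x; simp [ψ, Function.iterate_succ_apply']
      set A := (N (w (m + 1))).a with hA
      set B := (N (w (m + 1))).b with hB
      have hAB : A ≤ B := le_of_lt (N (w (m + 1))).hab
      have horient : (ψ (m + 1) u < A ∧ B < ψ (m + 1) v) ∨
          (ψ (m + 1) v < A ∧ B < ψ (m + 1) u) := by
        rcases (hw m).2 with ⟨hre, hle⟩ | ⟨hre, hle⟩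
        · left
          constructor
          · rw [hψsucc u]; exact (hle hue).1
          · rw [hψsucc v]; exact (hre hve).1
        · right
          constructor
          · rw [hψsucc v]; exact (hre hve).1
          · rw [hψsucc u]; exact (hle hue).1
      have step : ∃ u' v', u' ∈ I ∧ v' ∈ I ∧ ψ (m + 1) u' = A ∧ ψ (m + 1) v' = B ∧
          ∀ x ∈ Set.uIcc u' v', ψ (m + 1) x ∈ Icc A B := by
        rcases le_total u v with huv | hvu
        · have hIeq : I = Icc u v := Set.uIcc_of_le huv
          obtain ⟨u', v', h1, h2, h3, h4, h5⟩ :=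
            oneD' huv hAB (hIeq ▸ hcontψ) horient
          exact ⟨u', v', hIeq ▸ h1, hIeq ▸ h2, h3, h4, h5⟩
        · have hIeq : I = Icc v u := Set.uIcc_of_ge hvu
          obtain ⟨u', v', h1, h2, h3, h4, h5⟩ :=
            oneD' hvu hAB (hIeq ▸ hcontψ) (by tauto)
          exact ⟨u', v', hIeq ▸ h1, hIeq ▸ h2, h3, h4, h5⟩
      obtain ⟨u', v', hu'I, hv'I, hu'ψ, hv'ψ, hmem'⟩ := step
      refine ⟨u', v', hu'ψ, hv'ψ, ?_⟩
      have hsub : Set.uIcc u' v' ⊆ I := Set.uIcc_subset_uIcc hu'I hv'I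
      intro x hx i hi
      rcases Nat.lt_succ_iff_lt_or_eq.1 (Nat.lt_succ_of_le hi) with h | h
      · exact hmem x (hsub hx) i (Nat.lt_succ_iff.1 h)
      · subst h
        exact hmem' x hx
  obtain ⟨u, v, _, _, hmem⟩ := main n
  exact ⟨γ u, memBox u n (hmem u Set.left_mem_uIcc)⟩


/-- **Covering relations give symbolic dynamics.** Given pairwise disjoint h-sets
`N₁, …, N_k`, a continuous map `f` on their union and a 0-1 transition matrix `M` such
that `M i j = 1` implies `Nᵢ` `f`-covers `N_j`, every biinfinite sequence of symbols
admissible for `M` is realized by a full orbit of `f` visiting the corresponding h-sets. -/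
theorem covering_relations_symbolic_dynamics
    (k : ℕ) (hk : 1 ≤ k) (N : Fin k → HSet)
    (hdisj : ∀ i j, i ≠ j → Disjoint (N i).box (N j).box)
    (f : ℝ × ℝ → ℝ × ℝ) (hf : ContinuousOn f (⋃ i, (N i).box))
    (M : Fin k → Fin k → ℕ) (hM01 : ∀ i j, M i j = 0 ∨ M i j = 1)
    (hcov : ∀ i j, M i j = 1 → Covers f (N i) (N j))
    (c : ℤ → Fin k) (hc : ∀ j : ℤ, M (c j) (c (j + 1)) = 1) :
    ∃ x : ℤ → ℝ × ℝ, ∀ j : ℤ, x j ∈ (N (c j)).box ∧ f (x j) = x (j + 1) := by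
  have hcovseq : ∀ j : ℤ, Covers f (N (c j)) (N (c (j + 1))) := fun j => hcov _ _ (hc j)
  -- finite orbits
  have hp : ∀ n : ℕ, ∃ p : ℝ × ℝ, ∀ i ≤ 2 * n, f^[i] p ∈ (N (c ((i : ℤ) - n))).box := by
    intro n
    refine key k N f hf (fun i => c ((i : ℤ) - n)) ?_ (2 * n)
    intro i
    have h1 := hcovseq ((i : ℤ) - n)
    have h2 : ((i : ℤ) - n) + 1 = ((i + 1 : ℕ) : ℤ) - n := by push_cast; ring
    rw [h2] at h1
    exact h1
  choose p hp using hp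
  -- approximate biinfinite sequences
  set xs : ℕ → ℤ → ℝ × ℝ := fun n j =>
    if h : -(n : ℤ) ≤ j ∧ j ≤ n then f^[(j + n).toNat] (p n)
    else ((N (c j)).a, (N (c j)).c) with hxs
  have hcorner : ∀ j : ℤ, ((N (c j)).a, (N (c j)).c) ∈ (N (c j)).box :=
    fun j => ⟨⟨le_rfl, le_of_lt (N (c j)).hab⟩, ⟨le_rfl, le_of_lt (N (c j)).hcd⟩⟩
  have hxsbox : ∀ n (j : ℤ), xs n j ∈ (N (c j)).box := by
    intro n j
    simp only [hxs]
    split_ifs with h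
    · have h1 := hp n ((j + n).toNat) (by omega)
      have h2 : (((j + n).toNat : ℤ)) - n = j := by omega
      rw [h2] at h1
      exact h1
    · exact hcorner j
  have hxsorbit : ∀ (n : ℕ) (j : ℤ), -(n : ℤ) ≤ j → j < n → f (xs n j) = xs n (j + 1) := by
    intro n j h1 h2
    simp only [hxs]
    rw [dif_pos ⟨h1, by omega⟩, dif_pos ⟨by omega, by omega⟩]
    have h3 : (j + 1 + n).toNat = (j + n).toNat + 1 := by omega
    rw [h3, Function.iterate_succ_apply']
  -- compactness setup
  set K : Set (ℤ → ℝ × ℝ) := univ.pi (fun j => (N (c j)).box) with hK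
  have hboxcomp : ∀ j : ℤ, IsCompact (N (c j)).box :=
    fun j => (isCompact_Icc).prod isCompact_Icc
  have hKcomp : IsCompact K := isCompact_univ_pi hboxcomp
  set Gr : ℤ → Set ((ℝ × ℝ) × (ℝ × ℝ)) := fun j => (fun q => (q, f q)) '' (N (c j)).box
    with hGr
  have hGrcomp : ∀ j, IsCompact (Gr j) := by
    intro j
    refine (hboxcomp j).image_of_continuousOn ?_
    exact continuousOn_id.prodMk (hf.mono (subset_iUnion (fun i => (N i).box) (c j)))
  have hGrcl : ∀ j, IsClosed (Gr j) := fun j => (hGrcomp j).isClosed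
  set S : ℕ → Set (ℤ → ℝ × ℝ) := fun n =>
    K ∩ ⋂ j : ℤ, {x | -(n : ℤ) ≤ j → j < n → (x j, x (j + 1)) ∈ Gr j} with hS
  have hScl : ∀ n, IsClosed (S n) := by
    intro n
    refine IsClosed.inter (isClosed_set_pi (fun j _ => IsClosed.prod isClosed_Icc isClosed_Icc)) ?_
    refine isClosed_iInter (fun j => ?_)
    by_cases h1 : -(n : ℤ) ≤ j
    · by_cases h2 : j < n
      · have : {x : ℤ → ℝ × ℝ | -(n : ℤ) ≤ j → j < n → (x j, x (j + 1)) ∈ Gr j} =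
            (fun x : ℤ → ℝ × ℝ => (x j, x (j + 1))) ⁻¹' (Gr j) := by
          ext x; simp [h1, h2]
        rw [this]
        exact (hGrcl j).preimage ((continuous_apply j).prodMk (continuous_apply (j + 1)))
      · have : {x : ℤ → ℝ × ℝ | -(n : ℤ) ≤ j → j < n → (x j, x (j + 1)) ∈ Gr j} = univ := by
          ext x; simp [h2]
        rw [this]; exact isClosed_univ
    · have : {x : ℤ → ℝ × ℝ | -(n : ℤ) ≤ j → j < n → (x j, x (j + 1)) ∈ Gr j} = univ := by
        ext x; simp [h1]
      rw [this]; exact isClosed_univ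
  have hSne : ∀ n, (S n).Nonempty := by
    intro n
    refine ⟨xs n, ?_, ?_⟩
    · exact fun j _ => hxsbox n j
    · refine mem_iInter.2 (fun j => ?_)
      intro h1 h2
      exact ⟨xs n j, hxsbox n j, by dsimp only; rw [hxsorbit n j h1 h2]⟩
  have hSmono : ∀ n, S (n + 1) ⊆ S n := by
    intro n x hx
    refine ⟨hx.1, mem_iInter.2 (fun j => ?_)⟩
    intro h1 h2
    exact mem_iInter.1 hx.2 j (by omega) (by omega)
  have hScomp : IsCompact (S 0) := hKcomp.of_isClosed_subset (hScl 0) inter_subset_left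
  obtain ⟨x, hx⟩ := IsCompact.nonempty_iInter_of_sequence_nonempty_isCompact_isClosed
    S hSmono hSne hScomp hScl
  refine ⟨x, fun j => ?_⟩
  have hxK : x ∈ K := (mem_iInter.1 hx 0).1
  have hxbox : x j ∈ (N (c j)).box := hxK j (mem_univ j)
  refine ⟨hxbox, ?_⟩
  have hn := mem_iInter.1 hx (j.natAbs + 1)
  have hgr : (x j, x (j + 1)) ∈ Gr j :=
    mem_iInter.1 hn.2 j (by omega) (by omega)
  obtain ⟨q, hq, heq⟩ := hgr
  have hq1 : q = x j := congrArg Prod.fst heq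
  have hq2 : f q = x (j + 1) := congrArg Prod.snd heq
  rw [← hq1]; exact hq2
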